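/- Consider the double complex computing cyclic homology of the simplicial ring resolution R of ℤ/pⁿ: in bidegree giving total degree 2k one has generators 1⊗t^{⊗k}, with vertical differential b(t^{⊗k}) = pⁿ(1⊗t^{⊗k-1}) and horizontal (Connes) differential B(t^{⊗k}) = k·(1⊗t^{⊗k}), B(1⊗t^{⊗k}) = 0. The homology of the total complex in degree 2(j-1) is cyclic of order p^{nj} for 2(j-1) < 2p, and vanishes in odd degrees below 2p. In other words, the derived cyclic homology of ℤ/pⁿ satisfies HC̃_{2(j-1)}(ℤ/pⁿ) ≅ ℤ/p^{nj} for 2(j-1) < 2p and HC̃_i(ℤ/pⁿ) = 0 for odd i < 2p. -/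

import Mathlib

open CategoryTheory

/-- The component in odd total degree `m+1 = 2r+1` of the differential `b + B` of
the cyclic bicomplex `B(R)_{s,t} = C_{t-s}` of the resolution `R` of `ℤ/pⁿ`
(with `c = pⁿ`): the total complex has in degree `2r` the generators `1⊗t^{⊗(r-s)}`
(column `s = 0, …, r`) and in degree `2r+1` the generators `t^{⊗(r+1-s)}`
(column `s = 0, …, r`), with `b(t^{⊗k}) = c·(1⊗t^{⊗(k-1)})` (same column) and
`B(t^{⊗k}) = k·(1⊗t^{⊗k})` (column `s-1`), `B(1⊗t^{⊗k}) = 0`. In coordinates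
indexed by the column `s`, the target coordinate `s` receives
`c·x_s + (m/2 - s)·x_{s+1}`. -/
def cyclicTotalD (c : ℤ) (m : ℕ) :
    ((Fin ((m + 1) / 2 + 1) → ℤ) →ₗ[ℤ] (Fin (m / 2 + 1) → ℤ)) where
  toFun x s :=
    c * x ⟨s.val, lt_of_lt_of_le s.isLt
        (Nat.succ_le_succ (Nat.div_le_div_right (Nat.le_succ m)))⟩ +
      ((m / 2 : ℤ) - (s.val : ℤ)) *
        (if h : s.val + 1 < (m + 1) / 2 + 1 then x ⟨s.val + 1, h⟩ else 0)
  map_add' a b := by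
    funext s
    by_cases h : s.val + 1 < (m + 1) / 2 + 1
    · simp only [dif_pos h, Pi.add_apply]
      ring
    · simp only [dif_neg h, Pi.add_apply]
      ring
  map_smul' r a := by
    funext s
    by_cases h : s.val + 1 < (m + 1) / 2 + 1
    · simp only [dif_pos h, Pi.smul_apply, smul_eq_mul, RingHom.id_apply]
      ring
    · simp only [dif_neg h, Pi.smul_apply, smul_eq_mul, RingHom.id_apply]
      ring

/-- The total complex of the cyclic bicomplex `(B(R), b, B)` of the resolution `R` of
`ℤ/pⁿ` (`c = pⁿ`): in total degree `m` it is free on the `⌊m/2⌋ + 1` generators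
`1⊗t^{⊗k}` (`m` even) resp. `t^{⊗k}` (`m` odd), the differential from even degrees
vanishes and from odd degrees is given by `cyclicTotalD`. -/
noncomputable def cyclicTotalComplex (c : ℤ) : ChainComplex (ModuleCat ℤ) ℕ :=
  ChainComplex.of (fun m => ModuleCat.of ℤ (Fin (m / 2 + 1) → ℤ))
    (fun m => if Even m then ModuleCat.ofHom (cyclicTotalD c m) else 0)
    (by
      intro n
      rcases Nat.even_or_odd n with h | h
      · have h' : ¬ Even (n + 1) := by simp [Nat.even_add_one, h]
        simp only [if_neg h']
        exact Limits.zero_comp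
      · simp only [if_neg (Nat.not_even_iff_odd.mpr h)]
        exact Limits.comp_zero)

namespace CyclicAux

lemma cyclicTotalD_apply (c : ℤ) (m : ℕ) (x : Fin ((m+1)/2+1) → ℤ) (s : Fin (m/2+1)) :
    cyclicTotalD c m x s =
      c * x ⟨s.val, lt_of_lt_of_le s.isLt
        (Nat.succ_le_succ (Nat.div_le_div_right (Nat.le_succ m)))⟩ +
      ((m : ℤ) / 2 - (s.val : ℤ)) *
        (if h : s.val + 1 < (m + 1) / 2 + 1 then x ⟨s.val + 1, h⟩ else 0) := rfl

lemma cyclicTotalD_injective (c : ℤ) (hc : c ≠ 0) (m : ℕ) (hm : Even m) :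
    Function.Injective (cyclicTotalD c m) := by
  have hm2 : m % 2 = 0 := Nat.even_iff.mp hm
  rw [← LinearMap.ker_eq_bot, LinearMap.ker_eq_bot']
  intro x hx
  have key : ∀ k : ℕ, ∀ sv : ℕ, ∀ hlt : sv < (m+1)/2 + 1, (m+1)/2 - sv ≤ k →
      x ⟨sv, hlt⟩ = 0 := by
    intro k
    induction k with
    | zero =>
      intro sv hlt hs
      have hsv : sv = m / 2 := by omega
      subst hsv
      have h0 := congrFun hx ⟨m / 2, by omega⟩
      rw [cyclicTotalD_apply] at h0
      have hz : (m : ℤ) / 2 - ((m / 2 : ℕ) : ℤ) = 0 := by omega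
      rw [hz, zero_mul, add_zero] at h0
      simp only [Pi.zero_apply] at h0
      exact (mul_eq_zero.mp h0).resolve_left hc
    | succ k ih =>
      intro sv hlt hs
      by_cases hk : (m+1)/2 - sv ≤ k
      · exact ih sv hlt hk
      · have hsv : sv < m / 2 := by omega
        have h0 := congrFun hx ⟨sv, by omega⟩
        rw [cyclicTotalD_apply] at h0
        have hd : sv + 1 < (m+1)/2 + 1 := by omega
        rw [dif_pos hd] at h0
        rw [ih (sv+1) hd (by omega), mul_zero, add_zero] at h0
        simp only [Pi.zero_apply] at h0
        exact (mul_eq_zero.mp h0).resolve_left hc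
  funext s
  obtain ⟨sv, hlt⟩ := s
  exact key ((m+1)/2) sv hlt (by omega)

end CyclicAux

namespace CyclicAux

lemma mem_range_rel (c : ℤ) (m : ℕ) (hm : Even m) (s : ℕ) (hs : s < m / 2) :
    (fun u : Fin (m/2+1) =>
        (if u.val = s then ((m : ℤ)/2 - s) else 0) + (if u.val = s+1 then c else 0))
      ∈ LinearMap.range (cyclicTotalD c m) := by
  have hm2 : m % 2 = 0 := Nat.even_iff.mp hm
  refine ⟨fun t => if t.val = s + 1 then 1 else 0, ?_⟩
  funext u
  rw [cyclicTotalD_apply]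
  simp only []
  by_cases h1 : u.val = s
  · have hd : u.val + 1 < (m+1)/2 + 1 := by omega
    rw [dif_pos hd]
    rw [if_neg (by omega), if_pos (by omega), if_pos h1, if_neg (by omega), h1]
    ring
  · by_cases h2 : u.val = s + 1
    · rw [if_pos h2, if_neg h1, if_pos h2]
      have : ((if h : u.val + 1 < (m + 1) / 2 + 1 then
          (if u.val + 1 = s + 1 then (1:ℤ) else 0) else 0)) = 0 := by
        split_ifs with h3 h4
        · omega
        · rfl
        · rfl
      rw [this]
      ring
    · rw [if_neg h2, if_neg h1, if_neg h2]
      have : ((if h : u.val + 1 < (m + 1) / 2 + 1 then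
          (if u.val + 1 = s + 1 then (1:ℤ) else 0) else 0)) = 0 := by
        split_ifs with h3 h4
        · omega
        · rfl
        · rfl
      rw [this]
      ring

lemma mem_range_torsion (c : ℤ) (m : ℕ) (hm : Even m) (s : ℕ) (hs : s < m/2 + 1) :
    (fun u : Fin (m/2+1) => if u.val = s then c^(m/2+1) else 0)
      ∈ LinearMap.range (cyclicTotalD c m) := by
  have hm2 : m % 2 = 0 := Nat.even_iff.mp hm
  refine ⟨fun t => if t.val ≤ s then
      (-1)^(s - t.val) * (∏ i ∈ Finset.Ico t.val s, ((m : ℤ)/2 - i)) * c^(m/2 - s + t.val)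
      else 0, ?_⟩
  funext u
  rw [cyclicTotalD_apply]
  simp only []
  rcases lt_trichotomy u.val s with h1 | h1 | h1
  · -- u < s
    have hd : u.val + 1 < (m+1)/2 + 1 := by omega
    rw [dif_pos hd]
    rw [if_pos (by omega : u.val ≤ s), if_pos (by omega : u.val + 1 ≤ s),
      if_neg (by omega)]
    have hprod : (∏ i ∈ Finset.Ico u.val s, ((m : ℤ)/2 - i)) =
        ((m : ℤ)/2 - u.val) * ∏ i ∈ Finset.Ico (u.val+1) s, ((m : ℤ)/2 - i) :=
      Finset.prod_eq_prod_Ico_succ_bot h1 _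
    have hsign : ((-1 : ℤ))^(s - u.val) = -1 * (-1)^(s - (u.val+1)) := by
      have : s - u.val = (s - (u.val + 1)) + 1 := by omega
      rw [this, pow_succ]
      ring
    have hexp : m/2 - s + (u.val + 1) = (m/2 - s + u.val) + 1 := by omega
    rw [hprod, hsign, hexp, pow_succ]
    ring
  · -- u = s
    rw [if_pos (by omega : u.val ≤ s), if_pos h1]
    have h2 : ((if h : u.val + 1 < (m + 1) / 2 + 1 then
        (if u.val + 1 ≤ s then (-1:ℤ)^(s - (u.val+1)) *
          (∏ i ∈ Finset.Ico (u.val+1) s, ((m : ℤ)/2 - i)) * c^(m/2 - s + (u.val+1))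
        else 0) else 0)) = 0 := by
      split_ifs with h3 h4
      · omega
      · rfl
      · rfl
    rw [h2, mul_zero, add_zero, h1]
    rw [Nat.sub_self, pow_zero, one_mul, Finset.Ico_self, Finset.prod_empty, one_mul]
    have : m/2 - s + s = m/2 := by omega
    rw [this, ← pow_succ']
  · -- u > s
    rw [if_neg (by omega : ¬ u.val ≤ s), if_neg (by omega : ¬ u.val = s)]
    split_ifs with h3 h4
    · omega
    · ring
    · ring

end CyclicAux

namespace CyclicAux

lemma dvd_of_mem_range (c : ℤ) (m : ℕ) (hm : Even m) (a : ℤ)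
    (h : (fun u : Fin (m/2+1) => if u.val = m/2 then a else 0)
      ∈ LinearMap.range (cyclicTotalD c m)) :
    c^(m/2+1) ∣ ((m/2).factorial : ℤ) * a := by
  have hm2 : m % 2 = 0 := Nat.even_iff.mp hm
  obtain ⟨y, hy⟩ := h
  have key : ∀ k : ℕ, k ≤ m/2 → ∀ t : Fin ((m+1)/2+1), t.val = m/2 - k →
      c^(k+1) * y t = (-1)^k * (k.factorial : ℤ) * a := by
    intro k
    induction k with
    | zero =>
      intro _ t ht
      have h0 := congrFun hy ⟨t.val, by omega⟩
      rw [cyclicTotalD_apply] at h0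
      have hz : (m : ℤ) / 2 - ((t.val : ℕ) : ℤ) = 0 := by omega
      rw [Fin.eta, hz, zero_mul, add_zero, if_pos (by omega : t.val = m/2)] at h0
      simpa using h0
    | succ k ih =>
      intro hk t ht
      have h0 := congrFun hy ⟨t.val, by omega⟩
      rw [cyclicTotalD_apply] at h0
      have hd : t.val + 1 < (m+1)/2 + 1 := by omega
      rw [Fin.eta, dif_pos hd, if_neg (by omega : ¬ t.val = m/2)] at h0
      have hco : (m : ℤ)/2 - ((t.val : ℕ) : ℤ) = (k : ℤ) + 1 := by omega
      rw [hco] at h0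
      have ih' := ih (by omega) ⟨t.val + 1, hd⟩ (by simp; omega)
      have hfact : ((k+1).factorial : ℤ) = ((k:ℤ)+1) * (k.factorial : ℤ) := by
        rw [Nat.factorial_succ]; push_cast; ring
      rw [hfact]
      have hps : ((-1 : ℤ))^(k+1) = (-1) * (-1)^k := by rw [pow_succ]; ring
      rw [hps]
      have hps2 : c^(k+1+1) = c * c^(k+1) := by rw [pow_succ]; ring
      rw [hps2]
      linear_combination c^(k+1) * h0 - ((k:ℤ)+1) * ih'
  have h0lt : 0 < (m+1)/2 + 1 := by omega
  have hk := key (m/2) le_rfl ⟨0, h0lt⟩ (by simp)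
  have hsign : ((-1 : ℤ))^(m/2) * ((-1 : ℤ))^(m/2) = 1 := by
    rw [← pow_add]
    exact Even.neg_one_pow ⟨m/2, rfl⟩
  refine ⟨(-1)^(m/2) * y ⟨0, h0lt⟩, ?_⟩
  linear_combination (-(-1:ℤ)^(m/2)) * hk - ((m/2).factorial : ℤ) * a * hsign

end CyclicAux

namespace CyclicAux

def uvec (d s : ℕ) : Fin d → ℤ := fun u => if u.val = s then 1 else 0

lemma smul_uvec (d s : ℕ) (a : ℤ) :
    a • uvec d s = fun u => if u.val = s then a else 0 := by
  funext u
  by_cases h : u.val = s <;> simp [uvec, h]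

lemma quot_equiv (p n j : ℕ) (hp : p.Prime) (hj : 1 ≤ j) (hjp : j - 1 < p) :
    Nonempty (((Fin ((2*(j-1))/2+1) → ℤ) ⧸
        LinearMap.range (cyclicTotalD ((p:ℤ)^n) (2*(j-1)))) ≃ₗ[ℤ] ZMod (p^(n*j))) := by
  set m := 2 * (j - 1) with hm
  set c : ℤ := (p:ℤ)^n with hc
  have hm2 : m % 2 = 0 := by omega
  have hmEven : Even m := Nat.even_iff.mpr hm2
  have hr : m / 2 = j - 1 := by omega
  have hcN : c ^ (m/2+1) = ((p^(n*j) : ℕ) : ℤ) := by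
    rw [hc, ← pow_mul, show m/2 + 1 = j from by omega]
    push_cast
    ring
  set π := (LinearMap.range (cyclicTotalD c m)).mkQ with hπ
  have htors : ∀ s : ℕ, s < m/2 + 1 → ((p^(n*j) : ℕ) : ℤ) • π (uvec (m/2+1) s) = 0 := by
    intro s hs
    rw [← map_smul, hπ, Submodule.mkQ_apply, Submodule.Quotient.mk_eq_zero, smul_uvec,
      ← hcN]
    exact mem_range_torsion c m hmEven s hs
  have gen : ∀ k : ℕ, ∀ s : ℕ, s < m/2 + 1 → m/2 - s ≤ k →
      ∃ b : ℤ, π (uvec (m/2+1) s) = b • π (uvec (m/2+1) (m/2)) := by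
    intro k
    induction k with
    | zero =>
      intro s hs hks
      have : s = m/2 := by omega
      subst this
      exact ⟨1, (one_smul _ _).symm⟩
    | succ k ih =>
      intro s hs hks
      by_cases hk : m/2 - s ≤ k
      · exact ih s hs hk
      · have hslt : s < m / 2 := by omega
        obtain ⟨b', hb'⟩ := ih (s+1) (by omega) (by omega)
        have hfun : (fun u : Fin (m/2+1) =>
            (if u.val = s then ((m : ℤ)/2 - s) else 0) + (if u.val = s+1 then c else 0))
            = ((m:ℤ)/2 - s) • uvec (m/2+1) s + c • uvec (m/2+1) (s+1) := by
          funext u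
          simp only [Pi.add_apply, Pi.smul_apply, uvec, smul_eq_mul, mul_ite, mul_one,
            mul_zero]
        have h0 : π (((m:ℤ)/2 - s) • uvec (m/2+1) s + c • uvec (m/2+1) (s+1)) = 0 := by
          rw [hπ, Submodule.mkQ_apply, Submodule.Quotient.mk_eq_zero, ← hfun]
          exact mem_range_rel c m hmEven s hslt
        rw [map_add, map_smul, map_smul] at h0
        have hrel : ((m:ℤ)/2 - s) • π (uvec (m/2+1) s) = -(c • π (uvec (m/2+1) (s+1))) :=
          eq_neg_of_add_eq_zero_left h0
        have hd1 : Nat.Coprime p (m/2 - s) :=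
          (hp.coprime_iff_not_dvd).mpr (fun hdvd => by
            have := Nat.le_of_dvd (by omega) hdvd; omega)
        have hd3 : IsCoprime ((m/2 - s : ℕ) : ℤ) (((p^(n*j) : ℕ)) : ℤ) :=
          Nat.isCoprime_iff_coprime.mpr (Nat.Coprime.pow_right _ hd1.symm)
        have hcast : ((m/2 - s : ℕ) : ℤ) = (m:ℤ)/2 - s := by omega
        rw [hcast] at hd3
        obtain ⟨u, v, huv⟩ := hd3
        refine ⟨-(u * (c * b')), ?_⟩
        calc π (uvec (m/2+1) s)
            = (u * ((m:ℤ)/2 - s) + v * ((p^(n*j) : ℕ) : ℤ)) • π (uvec (m/2+1) s) := by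
              rw [huv, one_smul]
          _ = u • (((m:ℤ)/2 - s) • π (uvec (m/2+1) s)) +
              v • (((p^(n*j) : ℕ) : ℤ) • π (uvec (m/2+1) s)) := by
              rw [add_smul, mul_smul, mul_smul]
          _ = u • -(c • (b' • π (uvec (m/2+1) (m/2)))) + v • (0 : _) := by
              rw [hrel, hb', htors s hs]
          _ = -(u * (c * b')) • π (uvec (m/2+1) (m/2)) := by
              rw [smul_zero, add_zero, smul_smul, smul_neg, smul_smul, ← neg_smul]
  -- the map ψ : ZMod N →ₗ[ℤ] Q
  have hNq : (zmultiplesHom _ (π (uvec (m/2+1) (m/2)))) ((p^(n*j) : ℕ) : ℤ) = 0 := by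
    rw [zmultiplesHom_apply]
    exact htors (m/2) (by omega)
  set ψ₀ := ZMod.lift (p^(n*j)) ⟨zmultiplesHom _ (π (uvec (m/2+1) (m/2))), hNq⟩ with hψ₀
  have spec : ∀ a : ℤ, ψ₀ ((a : ℤ) : ZMod (p^(n*j))) = a • π (uvec (m/2+1) (m/2)) := by
    intro a
    rw [hψ₀, ZMod.lift_coe]
    rfl
  have hinj : Function.Injective ψ₀ := by
    rw [injective_iff_map_eq_zero]
    intro z hz
    obtain ⟨a, rfl⟩ := ZMod.intCast_surjective z
    rw [spec] at hz
    rw [← map_smul, hπ, Submodule.mkQ_apply, Submodule.Quotient.mk_eq_zero, smul_uvec] at hz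
    have hdvd : c^(m/2+1) ∣ ((m/2).factorial : ℤ) * a :=
      dvd_of_mem_range c m hmEven a hz
    rw [hcN] at hdvd
    have hcopf : IsCoprime (((m/2).factorial : ℕ) : ℤ) (((p^(n*j) : ℕ)) : ℤ) :=
      Nat.isCoprime_iff_coprime.mpr (Nat.Coprime.pow_right _
        (((hp.coprime_iff_not_dvd).mpr (fun hdvd' => by
          have := (Nat.Prime.dvd_factorial hp).mp hdvd'; omega)).symm))
    have : ((p^(n*j) : ℕ) : ℤ) ∣ a := hcopf.symm.dvd_of_dvd_mul_left hdvd
    rwa [ZMod.intCast_zmod_eq_zero_iff_dvd]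
  have hsurj : Function.Surjective ψ₀ := by
    intro qq
    obtain ⟨x, rfl⟩ := Submodule.Quotient.mk_surjective _ qq
    choose b hb using fun s : Fin (m/2+1) => gen (m/2) s.val s.isLt (by omega)
    refine ⟨(((∑ s : Fin (m/2+1), x s * b s : ℤ)) : ZMod (p^(n*j))), ?_⟩
    rw [spec]
    have hxe : x = ∑ s : Fin (m/2+1), x s • uvec (m/2+1) s.val := by
      have huv : ∀ s : Fin (m/2+1), uvec (m/2+1) s.val =
          fun u => if s = u then (1:ℤ) else 0 := by
        intro s
        funext u
        by_cases h : s = u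
        · simp [uvec, h]
        · rw [uvec, if_neg (by simpa [Fin.ext_iff, eq_comm] using h), if_neg h]
      calc x = ∑ s : Fin (m/2+1), x s • fun u => if s = u then (1:ℤ) else 0 :=
            pi_eq_sum_univ x
        _ = ∑ s : Fin (m/2+1), x s • uvec (m/2+1) s.val := by
            refine Finset.sum_congr rfl fun s _ => by rw [huv s]
    have hmkx : (Submodule.Quotient.mk x :
        (Fin (m/2+1) → ℤ) ⧸ LinearMap.range (cyclicTotalD c m)) = π x := by
      rw [hπ, Submodule.mkQ_apply]
    have hπx : π x = ∑ s : Fin (m/2+1), x s • π (uvec (m/2+1) s.val) := by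
      conv_lhs => rw [hxe]
      rw [map_sum]
      simp only [map_smul]
    rw [hmkx, hπx, Finset.sum_smul]
    exact Finset.sum_congr rfl fun s _ => by rw [hb s, smul_smul]
  exact ⟨(LinearEquiv.ofBijective ψ₀.toIntLinearMap ⟨hinj, hsurj⟩).symm⟩

end CyclicAux

namespace CyclicAux

lemma d_succ (c : ℤ) (m : ℕ) : (cyclicTotalComplex c).d (m+1) m =
    if Even m then ModuleCat.ofHom (cyclicTotalD c m) else 0 := by
  unfold cyclicTotalComplex
  exact ChainComplex.of_d (fun m => ModuleCat.of ℤ (Fin (m / 2 + 1) → ℤ))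
    (fun m => if Even m then ModuleCat.ofHom (cyclicTotalD c m) else 0) m

lemma d_from_even (c : ℤ) (i : ℕ) (h : Even i) :
    (cyclicTotalComplex c).d i (i-1) = 0 := by
  cases i with
  | zero =>
    exact (cyclicTotalComplex c).shape 0 (0-1) (by simp [ComplexShape.down, ComplexShape.down'])
  | succ k =>
    show (cyclicTotalComplex c).d (k+1) k = 0
    rw [d_succ, if_neg (Nat.even_add_one.mp h)]
    rfl

lemma next_eq (i : ℕ) : (ComplexShape.down ℕ).next i = i - 1 := by
  cases i with
  | zero => exact ChainComplex.next_nat_zero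
  | succ k => exact ChainComplex.next_nat_succ k

end CyclicAux

open CyclicAux in
theorem stmt8' (p n : ℕ) (hp : p.Prime) (hn : 1 ≤ n) :
    (∀ j : ℕ, 1 ≤ j → 2 * (j - 1) < 2 * p →
      Nonempty ((cyclicTotalComplex ((p : ℤ) ^ n)).homology (2 * (j - 1)) ≅
        ModuleCat.of ℤ (ZMod (p ^ (n * j))))) ∧
    (∀ i : ℕ, i < 2 * p → Odd i →
      Limits.IsZero ((cyclicTotalComplex ((p : ℤ) ^ n)).homology i)) := by
  constructor
  · intro j hj hjp
    obtain ⟨e⟩ := quot_equiv p n j hp hj (by omega)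
    have hEi : Even (2 * (j-1)) := ⟨j-1, by omega⟩
    have hf : ((cyclicTotalComplex ((p:ℤ)^n)).sc' (2*(j-1)+1) (2*(j-1)) (2*(j-1)-1)).f
        = ModuleCat.ofHom (cyclicTotalD ((p:ℤ)^n) (2*(j-1))) := by
      show (cyclicTotalComplex ((p:ℤ)^n)).d (2*(j-1)+1) (2*(j-1)) = _
      rw [d_succ, if_pos hEi]
    have hg : ((cyclicTotalComplex ((p:ℤ)^n)).sc' (2*(j-1)+1) (2*(j-1)) (2*(j-1)-1)).g
        = 0 := by
      show (cyclicTotalComplex ((p:ℤ)^n)).d (2*(j-1)) (2*(j-1)-1) = 0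
      exact d_from_even _ _ hEi
    refine ⟨((cyclicTotalComplex ((p:ℤ)^n)).homologyIsoSc' (2*(j-1)+1) (2*(j-1))
        (2*(j-1)-1) (by simp) (next_eq _)).trans
      (((CategoryTheory.ShortComplex.LeftHomologyData.ofHasCokernel _ hg).homologyIso).trans
        ((ModuleCat.cokernelIsoRangeQuotient _).trans ?_))⟩
    have hrange : LinearMap.range
        (((cyclicTotalComplex ((p:ℤ)^n)).sc' (2*(j-1)+1) (2*(j-1)) (2*(j-1)-1)).f.hom)
        = LinearMap.range (cyclicTotalD ((p:ℤ)^n) (2*(j-1))) := by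
      rw [hf]; rfl
    rw [hrange]
    exact e.toModuleIso
  · intro i hip hodd
    obtain ⟨r, hr⟩ := hodd
    obtain ⟨k, rfl⟩ : ∃ k, i = k + 1 := ⟨2 * r, by omega⟩
    have hEk : Even k := ⟨r, by omega⟩
    have hf : ((cyclicTotalComplex ((p:ℤ)^n)).sc' (k+2) (k+1) k).f = 0 := by
      show (cyclicTotalComplex ((p:ℤ)^n)).d (k+2) (k+1) = 0
      rw [d_succ, if_neg (by simp [Nat.even_add_one, hEk])]
      rfl
    have hg : ((cyclicTotalComplex ((p:ℤ)^n)).sc' (k+2) (k+1) k).g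
        = ModuleCat.ofHom (cyclicTotalD ((p:ℤ)^n) k) := by
      show (cyclicTotalComplex ((p:ℤ)^n)).d (k+1) k = _
      rw [d_succ, if_pos hEk]
    have hpne : ((p:ℤ))^n ≠ 0 := pow_ne_zero n (Int.natCast_ne_zero.mpr hp.ne_zero)
    have hinj : Function.Injective (cyclicTotalD ((p:ℤ)^n) k) :=
      cyclicTotalD_injective _ hpne _ hEk
    have hex : ((cyclicTotalComplex ((p:ℤ)^n)).sc' (k+2) (k+1) k).Exact := by
      rw [CategoryTheory.ShortComplex.moduleCat_exact_iff]
      intro x hx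
      rw [hg] at hx
      have hx0 : x = 0 := hinj (show cyclicTotalD ((p:ℤ)^n) k x
        = cyclicTotalD ((p:ℤ)^n) k 0 by rw [map_zero]; exact hx)
      refine ⟨0, ?_⟩
      have hz : ((cyclicTotalComplex ((p:ℤ)^n)).sc' (k+2) (k+1) k).f 0 = 0 := map_zero _
      rw [hz, hx0]
    have hz := (CategoryTheory.ShortComplex.exact_iff_isZero_homology _).mp hex
    exact Limits.IsZero.of_iso hz ((cyclicTotalComplex ((p:ℤ)^n)).homologyIsoSc' (k+2)
      (k+1) k (by simp) (by simp))

/-- Computation of the derived cyclic homology of `ℤ/pⁿ` in degrees `< 2p`, as the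
homology of the total complex of the cyclic bicomplex of the resolution `R`:
`HC̃_{2(j-1)}(ℤ/pⁿ) ≅ ℤ/p^{nj}` for `2(j-1) < 2p`, and `HC̃_i(ℤ/pⁿ) = 0` for odd
`i < 2p`. -/
theorem stmt8 (p n : ℕ) (hp : p.Prime) (hn : 1 ≤ n) :
    (∀ j : ℕ, 1 ≤ j → 2 * (j - 1) < 2 * p →
      Nonempty ((cyclicTotalComplex ((p : ℤ) ^ n)).homology (2 * (j - 1)) ≅
        ModuleCat.of ℤ (ZMod (p ^ (n * j))))) ∧
    (∀ i : ℕ, i < 2 * p → Odd i →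
      Limits.IsZero ((cyclicTotalComplex ((p : ℤ) ^ n)).homology i)) :=
  stmt8' p n hp hn
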